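/- For every vector x ∈ S^7, the set D(x, ω̄_2160) of dot products of x with the points of the 2_41 polytope ω̄_2160 has at least five distinct elements. -/

import Mathlib

open MeasureTheory Metric
open scoped RealInnerProductSpace

noncomputable section

/-- `E n` is the Euclidean space `ℝ^n`; the unit sphere `S^{n-1}` is `Metric.sphere (0 : E n) 1`. -/
abbrev E (n : ℕ) : Type := EuclideanSpace ℝ (Fin n)

/-- Type I vectors of the `2_41` polytope: `4` zero coordinates and `4` coordinates `±1/2`. -/
noncomputable def typeI : Finset (E 8) :=
  letI : DecidableEq (E 8) := Classical.decEq _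
  ((Finset.univ : Finset (Finset (Fin 8) × (Fin 8 → Bool))).filter fun p => p.1.card = 4).image
    (fun p => (WithLp.toLp 2 (fun i => if i ∈ p.1 then (if p.2 i then -(1/2 : ℝ) else 1/2) else 0) : E 8))

/-- Type II vectors of the `2_41` polytope: `7` zero coordinates and one coordinate `±1`. -/
noncomputable def typeII : Finset (E 8) :=
  letI : DecidableEq (E 8) := Classical.decEq _
  (Finset.univ : Finset (Fin 8 × Bool)).image
    (fun p => (WithLp.toLp 2 (fun i => if i = p.1 then (if p.2 then -(1 : ℝ) else 1) else 0) : E 8))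

/-- Type III vectors of the `2_41` polytope: `7` coordinates `±1/4`, one coordinate `±3/4`,
with an odd total number of negative coordinates. -/
noncomputable def typeIII : Finset (E 8) :=
  letI : DecidableEq (E 8) := Classical.decEq _
  ((Finset.univ : Finset (Fin 8 × (Fin 8 → Bool))).filter fun p =>
      ¬ Even (Finset.univ.filter fun i => p.2 i = true).card).image
    (fun p => (WithLp.toLp 2 (fun i =>
      (if p.2 i then (-1 : ℝ) else 1) * (if i = p.1 then 3/4 else 1/4)) : E 8))

/-- The `2_41` polytope on `S^7`: the `2160` vectors of types I, II and III. -/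
noncomputable def poly241 : Finset (E 8) :=
  letI : DecidableEq (E 8) := Classical.decEq _
  typeI ∪ typeII ∪ typeIII

set_option maxRecDepth 8000

namespace Aux

def sg (b : Bool) : ℝ := if b then -1 else 1

lemma sg_false : sg false = 1 := rfl
lemma sg_true : sg true = -1 := rfl
lemma sg_not (b : Bool) : sg (!b) = - sg b := by cases b <;> simp [sg]

def V (x : E 8) : Set ℝ := (fun y => ⟪x, y⟫) '' (↑poly241 : Set (E 8))

lemma V_finite (x : E 8) : (V x).Finite := (poly241.finite_toSet).image _

lemma mem2 (x : E 8) (t : Fin 8) (b : Bool) : sg b * x t ∈ V x := by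
  letI : DecidableEq (E 8) := Classical.decEq _
  refine ⟨(WithLp.toLp 2 (fun i => if i = t then (if b then -(1:ℝ) else 1) else 0) : E 8), ?_, ?_⟩
  · simp only [poly241, Finset.mem_coe]
    refine Finset.mem_union_left _ (Finset.mem_union_right _ ?_)
    simp only [typeII]
    rw [Finset.mem_image]
    exact ⟨(t, b), Finset.mem_univ _, rfl⟩
  · simp only [PiLp.inner_apply, RCLike.inner_apply, conj_trivial, mul_ite, mul_zero,
      Finset.sum_ite_eq', PiLp.toLp_apply, ite_mul, zero_mul, Finset.sum_ite_eq]
    cases b <;> simp [sg] <;> ring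

lemma mem1 (x : E 8) (j k l r : Fin 8) (hjk : j ≠ k) (hjl : j ≠ l) (hjr : j ≠ r)
    (hkl : k ≠ l) (hkr : k ≠ r) (hlr : l ≠ r) (b1 b2 b3 b4 : Bool) :
    (sg b1 * x j + sg b2 * x k + sg b3 * x l + sg b4 * x r) / 2 ∈ V x := by
  letI : DecidableEq (E 8) := Classical.decEq _
  set ε : Fin 8 → Bool := fun t => if t = j then b1 else if t = k then b2 else if t = l then b3 else b4 with hε
  have hcard : ({j, k, l, r} : Finset (Fin 8)).card = 4 := by
    rw [Finset.card_insert_of_notMem (by simp [hjk, hjl, hjr]),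
      Finset.card_insert_of_notMem (by simp [hkl, hkr]),
      Finset.card_insert_of_notMem (by simp [hlr]), Finset.card_singleton]
  refine ⟨(WithLp.toLp 2 (fun i => if i ∈ ({j,k,l,r} : Finset (Fin 8)) then (if ε i then -(1/2 : ℝ) else 1/2) else 0) : E 8), ?_, ?_⟩
  · simp only [poly241, Finset.mem_coe]
    refine Finset.mem_union_left _ (Finset.mem_union_left _ ?_)
    simp only [typeI]
    rw [Finset.mem_image]
    exact ⟨({j,k,l,r}, ε), by simp [Finset.mem_filter, hcard], rfl⟩
  · simp only [PiLp.inner_apply, RCLike.inner_apply, conj_trivial, mul_ite, mul_zero,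
      PiLp.toLp_apply, ite_mul, zero_mul]
    rw [Finset.sum_ite_mem, Finset.univ_inter]
    rw [Finset.sum_insert (by simp [hjk, hjl, hjr]), Finset.sum_insert (by simp [hkl, hkr]),
      Finset.sum_insert (by simp [hlr]), Finset.sum_singleton]
    have hej : ε j = b1 := by simp [hε]
    have hek : ε k = b2 := by simp [hε, hjk.symm]
    have hel : ε l = b3 := by simp [hε, hjl.symm, hkl.symm]
    have her : ε r = b4 := by simp [hε, hjr.symm, hkr.symm, hlr.symm]
    rw [hej, hek, hel, her]
    cases b1 <;> cases b2 <;> cases b3 <;> cases b4 <;> simp [sg] <;> ring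


lemma five_le (x : E 8) (v1 v2 v3 v4 v5 : ℝ)
    (h1 : v1 ∈ V x) (h2 : v2 ∈ V x) (h3 : v3 ∈ V x) (h4 : v4 ∈ V x) (h5 : v5 ∈ V x)
    (n12 : v1 ≠ v2) (n13 : v1 ≠ v3) (n14 : v1 ≠ v4) (n15 : v1 ≠ v5)
    (n23 : v2 ≠ v3) (n24 : v2 ≠ v4) (n25 : v2 ≠ v5)
    (n34 : v3 ≠ v4) (n35 : v3 ≠ v5) (n45 : v4 ≠ v5) :
    5 ≤ (V x).ncard := by
  classical
  have hsub : (↑({v1, v2, v3, v4, v5} : Finset ℝ) : Set ℝ) ⊆ V x := by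
    intro z hz
    simp only [Finset.coe_insert, Finset.coe_singleton, Set.mem_insert_iff,
      Set.mem_singleton_iff] at hz
    rcases hz with rfl | rfl | rfl | rfl | rfl <;> assumption
  have hcard : ({v1, v2, v3, v4, v5} : Finset ℝ).card = 5 := by
    rw [Finset.card_insert_of_notMem (by simp [n12, n13, n14, n15]),
      Finset.card_insert_of_notMem (by simp [n23, n24, n25]),
      Finset.card_insert_of_notMem (by simp [n34, n35]),
      Finset.card_insert_of_notMem (by simp [n45]), Finset.card_singleton]
  calc (5 : ℕ) = ({v1, v2, v3, v4, v5} : Finset ℝ).card := hcard.symm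
    _ = (↑({v1, v2, v3, v4, v5} : Finset ℝ) : Set ℝ).ncard := (Set.ncard_coe_finset _).symm
    _ ≤ (V x).ncard := Set.ncard_le_ncard hsub (V_finite x)

end Aux

set_option maxHeartbeats 2000000 in
open Aux in
/-- Lemma 4.1 (first part): every point of `S^7` forms at least five distinct dot products with
the points of the `2_41` polytope. -/
theorem poly241_at_least_five_dot_products (x : E 8) (hx : x ∈ sphere (0 : E 8) 1) :
    5 ≤ ((fun y => ⟪x, y⟫) '' (↑poly241 : Set (E 8))).ncard := by
  classical
  show 5 ≤ (V x).ncard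
  have hxnorm : ‖x‖ = 1 := by simpa using mem_sphere_zero_iff_norm.mp hx
  have hxne : x ≠ 0 := by intro h; rw [h] at hxnorm; simp at hxnorm
  obtain ⟨i, -, him⟩ := Finset.exists_max_image Finset.univ (fun t => |x t|)
    ⟨0, Finset.mem_univ 0⟩
  replace him : ∀ t, |x t| ≤ |x i| := fun t => him t (Finset.mem_univ t)
  have hs0 : x i ≠ 0 := by
    intro h
    apply hxne
    ext t
    have h2 := him t
    rw [h, abs_zero] at h2
    exact abs_eq_zero.mp (le_antisymm h2 (abs_nonneg _))
  by_cases hW : ∃ j k l : Fin 8, j ≠ i ∧ k ≠ i ∧ l ≠ i ∧ j ≠ k ∧ j ≠ l ∧ k ≠ l ∧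
      ∃ b1 b2 b3 : Bool,
      ¬ (sg b1 * x j + sg b2 * x k + sg b3 * x l = 0 ∨
         sg b1 * x j + sg b2 * x k + sg b3 * x l = x i ∨
         sg b1 * x j + sg b2 * x k + sg b3 * x l = -x i ∨
         sg b1 * x j + sg b2 * x k + sg b3 * x l = 3 * x i ∨
         sg b1 * x j + sg b2 * x k + sg b3 * x l = -(3 * x i))
  · obtain ⟨j, k, l, hji, hki, hli, hjk, hjl, hkl, b1, b2, b3, hT⟩ := hW
    push_neg at hT
    set T := sg b1 * x j + sg b2 * x k + sg b3 * x l with hTdef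
    obtain ⟨hT0, hT1, hT2, hT3, hT4⟩ := hT
    have m1 : x i ∈ V x := by simpa [sg_false] using mem2 x i false
    have m2 : -x i ∈ V x := by simpa [sg_true] using mem2 x i true
    have m3 : (x i + T) / 2 ∈ V x := by
      have h := mem1 x i j k l hji.symm hki.symm hli.symm hjk hjl hkl false b1 b2 b3
      rw [show (x i + T) / 2
          = (sg false * x i + sg b1 * x j + sg b2 * x k + sg b3 * x l) / 2 from by
        rw [hTdef, sg_false]; ring]
      exact h
    have m4 : (x i - T) / 2 ∈ V x := by
      have h := mem1 x i j k l hji.symm hki.symm hli.symm hjk hjl hkl false (!b1) (!b2) (!b3)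
      rw [show (x i - T) / 2
          = (sg false * x i + sg (!b1) * x j + sg (!b2) * x k + sg (!b3) * x l) / 2 from by
        rw [hTdef, sg_false, sg_not, sg_not, sg_not]; ring]
      exact h
    have m5 : -((x i + T) / 2) ∈ V x := by
      have h := mem1 x i j k l hji.symm hki.symm hli.symm hjk hjl hkl true (!b1) (!b2) (!b3)
      rw [show -((x i + T) / 2)
          = (sg true * x i + sg (!b1) * x j + sg (!b2) * x k + sg (!b3) * x l) / 2 from by
        rw [hTdef, sg_true, sg_not, sg_not, sg_not]; ring]
      exact h
    exact five_le x (x i) (-x i) ((x i + T) / 2) ((x i - T) / 2) (-((x i + T) / 2))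
      m1 m2 m3 m4 m5
      (fun h => hs0 (by linarith)) (fun h => hT1 (by linarith)) (fun h => hT2 (by linarith))
      (fun h => hT4 (by linarith)) (fun h => hT4 (by linarith)) (fun h => hT3 (by linarith))
      (fun h => hT1 (by linarith)) (fun h => hT0 (by linarith)) (fun h => hT2 (by linarith))
      (fun h => hs0 (by linarith))
  · push_neg at hW
    -- Step 1: every other coordinate lies in {0, ±s/2, ±s}
    have key : ∀ t, t ≠ i →
        (x t = 0 ∨ x t = x i / 2 ∨ x t = -(x i / 2) ∨ x t = x i ∨ x t = -x i) := by
      intro t ht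
      have hc : 1 < ((Finset.univ.erase i).erase t).card := by
        rw [Finset.card_erase_of_mem (Finset.mem_erase.mpr ⟨ht, Finset.mem_univ t⟩),
          Finset.card_erase_of_mem (Finset.mem_univ i)]
        simp
      obtain ⟨k, hk, l, hl, hkl⟩ := Finset.one_lt_card.mp hc
      rw [Finset.mem_erase, Finset.mem_erase] at hk hl
      obtain ⟨hkt, hki, -⟩ := hk
      obtain ⟨hlt, hli, -⟩ := hl
      have h1 := hW t k l ht hki hli hkt.symm hlt.symm hkl false false false
      have h2 := hW t k l ht hki hli hkt.symm hlt.symm hkl false true true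
      simp only [sg_false, sg_true, one_mul, neg_one_mul] at h1 h2
      have habs := him t
      rcases abs_cases (x t) with ⟨e1, f1⟩ | ⟨e1, f1⟩ <;>
        rcases abs_cases (x i) with ⟨e2, f2⟩ | ⟨e2, f2⟩ <;>
        rw [e1, e2] at habs <;>
        (rcases h1 with h1 | h1 | h1 | h1 | h1 <;> rcases h2 with h2 | h2 | h2 | h2 | h2 <;>
          first
          | (left; linarith)
          | (right; left; linarith)
          | (right; right; left; linarith)
          | (right; right; right; left; linarith)
          | (right; right; right; right; linarith))
    -- Step 2: no coordinate equals ±s/2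
    have nohalf : ∀ j, j ≠ i → ∀ bj : Bool, sg bj * x j = x i / 2 → False := by
      intro j hji bj hbj
      by_cases h2Z : 2 ≤ (((Finset.univ.erase i).erase j).filter fun u => x u = 0).card
      · obtain ⟨k, hk, l, hl, hkl⟩ := Finset.one_lt_card.mp h2Z
        rw [Finset.mem_filter, Finset.mem_erase, Finset.mem_erase] at hk hl
        obtain ⟨⟨hkj, hki, -⟩, hk0⟩ := hk
        obtain ⟨⟨hlj, hli, -⟩, hl0⟩ := hl
        have h := hW j k l hji hki hli hkj.symm hlj.symm hkl bj false false
        rw [hbj] at h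
        simp only [sg_false, one_mul] at h
        rw [hk0, hl0] at h
        rcases h with h | h | h | h | h <;> exact hs0 (by linarith)
      · have hNc : 2 ≤ (((Finset.univ.erase i).erase j).filter fun u => ¬ x u = 0).card := by
          have hsum := Finset.card_filter_add_card_filter_not
            (s := (Finset.univ.erase i).erase j) (p := fun u => x u = 0)
          have hK : ((Finset.univ.erase i).erase j).card = 6 := by
            rw [Finset.card_erase_of_mem (Finset.mem_erase.mpr ⟨hji, Finset.mem_univ j⟩),
              Finset.card_erase_of_mem (Finset.mem_univ i)]
            simp
          omega
        obtain ⟨k, hk, l, hl, hkl⟩ := Finset.one_lt_card.mp hNc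
        rw [Finset.mem_filter, Finset.mem_erase, Finset.mem_erase] at hk hl
        obtain ⟨⟨hkj, hki, -⟩, hk0⟩ := hk
        obtain ⟨⟨hlj, hli, -⟩, hl0⟩ := hl
        have hr : ∀ u, u ≠ i → ¬ x u = 0 →
            ∃ b e, sg b * x u = e ∧ (e = x i / 2 ∨ e = x i) := by
          intro u hui hu0
          rcases key u hui with h | h | h | h | h
          · exact absurd h hu0
          · exact ⟨false, x i / 2, by rw [sg_false, one_mul, h], Or.inl rfl⟩
          · exact ⟨true, x i / 2, by rw [sg_true, h]; ring, Or.inl rfl⟩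
          · exact ⟨false, x i, by rw [sg_false, one_mul, h], Or.inr rfl⟩
          · exact ⟨true, x i, by rw [sg_true, h]; ring, Or.inr rfl⟩
        obtain ⟨bk, ek, hbk, hek⟩ := hr k hki hk0
        obtain ⟨bl, el, hbl, hel⟩ := hr l hli hl0
        have h := hW j k l hji hki hli hkj.symm hlj.symm hkl bj bk bl
        rw [hbj, hbk, hbl] at h
        rcases hek with rfl | rfl <;> rcases hel with rfl | rfl <;>
          rcases h with h | h | h | h | h <;> exact hs0 (by linarith)
    -- Step 3: every coordinate lies in {0, ±s}
    have key2 : ∀ t, x t = 0 ∨ x t = x i ∨ x t = -x i := by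
      intro t
      by_cases ht : t = i
      · right; left; rw [ht]
      · rcases key t ht with h | h | h | h | h
        · exact Or.inl h
        · exact absurd (nohalf t ht false (by rw [sg_false, one_mul, h])) (by simp)
        · exact absurd (nohalf t ht true (by rw [sg_true, h]; ring)) (by simp)
        · exact Or.inr (Or.inl h)
        · exact Or.inr (Or.inr h)
    by_cases hZ : 3 ≤ (Finset.univ.filter fun u => x u = 0).card
    · -- at least three zero coordinates
      obtain ⟨W, hWsub, hW3⟩ := Finset.exists_subset_card_eq hZ
      obtain ⟨z1, z2, z3, h12, h13, h23, rfl⟩ := Finset.card_eq_three.mp hW3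
      have hz1 : x z1 = 0 := (Finset.mem_filter.mp (hWsub (by simp))).2
      have hz2 : x z2 = 0 := (Finset.mem_filter.mp (hWsub (by simp))).2
      have hz3 : x z3 = 0 := (Finset.mem_filter.mp (hWsub (by simp))).2
      have hz1i : z1 ≠ i := fun h => hs0 (h ▸ hz1)
      have hz2i : z2 ≠ i := fun h => hs0 (h ▸ hz2)
      have hz3i : z3 ≠ i := fun h => hs0 (h ▸ hz3)
      have m1 : x i ∈ V x := by simpa [sg_false] using mem2 x i false
      have m2 : -x i ∈ V x := by simpa [sg_true] using mem2 x i true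
      have m3 : (0 : ℝ) ∈ V x := by simpa [sg_false, hz1] using mem2 x z1 false
      have m4 : x i / 2 ∈ V x := by
        have h := mem1 x i z1 z2 z3 hz1i.symm hz2i.symm hz3i.symm h12 h13 h23
          false false false false
        simp only [sg_false, one_mul, hz1, hz2, hz3, add_zero] at h
        exact h
      have m5 : -x i / 2 ∈ V x := by
        have h := mem1 x i z1 z2 z3 hz1i.symm hz2i.symm hz3i.symm h12 h13 h23
          true false false false
        simp only [sg_true, sg_false, one_mul, neg_one_mul, hz1, hz2, hz3, add_zero] at h
        exact h
      exact five_le x (x i) (-x i) 0 (x i / 2) (-x i / 2) m1 m2 m3 m4 m5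
        (fun h => hs0 (by linarith)) (fun h => hs0 (by linarith)) (fun h => hs0 (by linarith))
        (fun h => hs0 (by linarith)) (fun h => hs0 (by linarith)) (fun h => hs0 (by linarith))
        (fun h => hs0 (by linarith)) (fun h => hs0 (by linarith)) (fun h => hs0 (by linarith))
        (fun h => hs0 (by linarith))
    · -- at least six nonzero coordinates
      have hNc : 4 ≤ (Finset.univ.filter fun u => ¬ x u = 0).card := by
        have hsum := Finset.card_filter_add_card_filter_not
          (s := (Finset.univ : Finset (Fin 8))) (p := fun u => x u = 0)
        have h8 : (Finset.univ : Finset (Fin 8)).card = 8 := by simp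
        omega
      obtain ⟨W, hWsub, hW4⟩ := Finset.exists_subset_card_eq hNc
      obtain ⟨a, ha⟩ := Finset.card_pos.mp (by rw [hW4]; norm_num)
      have h3 : (W.erase a).card = 3 := by rw [Finset.card_erase_of_mem ha, hW4]
      obtain ⟨b, c, d, hbc, hbd, hcd, hbcd⟩ := Finset.card_eq_three.mp h3
      have hbW : b ∈ W.erase a := by rw [hbcd]; simp
      have hcW : c ∈ W.erase a := by rw [hbcd]; simp
      have hdW : d ∈ W.erase a := by rw [hbcd]; simp
      have hab : a ≠ b := fun h => (Finset.mem_erase.mp hbW).1 h.symm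
      have hac : a ≠ c := fun h => (Finset.mem_erase.mp hcW).1 h.symm
      have had : a ≠ d := fun h => (Finset.mem_erase.mp hdW).1 h.symm
      have hr : ∀ u, u ∈ W → (∃ bb, sg bb * x u = x i) ∧ (∃ bb, sg bb * x u = -x i) := by
        intro u hu
        have hu0 : ¬ x u = 0 := (Finset.mem_filter.mp (hWsub hu)).2
        rcases key2 u with h | h | h
        · exact absurd h hu0
        · exact ⟨⟨false, by rw [sg_false, one_mul, h]⟩, ⟨true, by rw [sg_true, h]; ring⟩⟩
        · exact ⟨⟨true, by rw [sg_true, h]; ring⟩, ⟨false, by rw [sg_false, one_mul, h]⟩⟩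
      obtain ⟨⟨pa, hpa⟩, ⟨na, hna⟩⟩ := hr a ha
      obtain ⟨⟨pb, hpb⟩, ⟨nb, hnb⟩⟩ := hr b (Finset.mem_of_mem_erase hbW)
      obtain ⟨⟨pc, hpc⟩, ⟨nc, hnc⟩⟩ := hr c (Finset.mem_of_mem_erase hcW)
      obtain ⟨⟨pd, hpd⟩, ⟨nd, hnd⟩⟩ := hr d (Finset.mem_of_mem_erase hdW)
      have m1 : 2 * x i ∈ V x := by
        have h := mem1 x a b c d hab hac had hbc hbd hcd pa pb pc pd
        rw [hpa, hpb, hpc, hpd] at h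
        rw [show (2 * x i : ℝ) = (x i + x i + x i + x i) / 2 from by ring]
        exact h
      have m2 : x i ∈ V x := by
        have h := mem1 x a b c d hab hac had hbc hbd hcd pa pb pc nd
        rw [hpa, hpb, hpc, hnd] at h
        rw [show (x i : ℝ) = (x i + x i + x i + -x i) / 2 from by ring]
        exact h
      have m3 : (0 : ℝ) ∈ V x := by
        have h := mem1 x a b c d hab hac had hbc hbd hcd pa pb nc nd
        rw [hpa, hpb, hnc, hnd] at h
        rw [show (0 : ℝ) = (x i + x i + -x i + -x i) / 2 from by ring]
        exact h
      have m4 : -x i ∈ V x := by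
        have h := mem1 x a b c d hab hac had hbc hbd hcd pa nb nc nd
        rw [hpa, hnb, hnc, hnd] at h
        rw [show (-x i : ℝ) = (x i + -x i + -x i + -x i) / 2 from by ring]
        exact h
      have m5 : -(2 * x i) ∈ V x := by
        have h := mem1 x a b c d hab hac had hbc hbd hcd na nb nc nd
        rw [hna, hnb, hnc, hnd] at h
        rw [show (-(2 * x i) : ℝ) = (-x i + -x i + -x i + -x i) / 2 from by ring]
        exact h
      exact five_le x (2 * x i) (x i) 0 (-x i) (-(2 * x i)) m1 m2 m3 m4 m5
        (fun h => hs0 (by linarith)) (fun h => hs0 (by linarith)) (fun h => hs0 (by linarith))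
        (fun h => hs0 (by linarith)) (fun h => hs0 (by linarith)) (fun h => hs0 (by linarith))
        (fun h => hs0 (by linarith)) (fun h => hs0 (by linarith)) (fun h => hs0 (by linarith))
        (fun h => hs0 (by linarith))
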